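/- Let K : [0,∞) → ℝ be continuous with K(s)/s → m as s → ∞ for some m ∈ (0,∞), and let z, k > 0. Define Z : [0,∞) → ℝ by Z(s) = z e^{K(s)} / (1 + kz ∫_0^s e^{K(r)} dr). Then (1/t) ∫_0^t Z(s) ds → m/k as t → ∞. -/

import Mathlib

open Real MeasureTheory Filter

private lemma exp_mul_intable (a S t : ℝ) :
    IntervalIntegrable (fun s => Real.exp (a*s)) volume S t :=
  (Real.continuous_exp.comp (continuous_const.mul continuous_id)).intervalIntegrable _ _

private lemma integral_exp_mul' (a : ℝ) (ha : 0 < a) (S t : ℝ) :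
    ∫ s in S..t, Real.exp (a*s) = (Real.exp (a*t) - Real.exp (a*S))/a := by
  have h : ∀ x ∈ Set.uIcc S t, HasDerivAt (fun s => Real.exp (a*s)/a) (Real.exp (a*x)) x := by
    intro x _
    have h1 : HasDerivAt (fun s : ℝ => a*s) a x := by
      simpa using (hasDerivAt_id x).const_mul a
    have h2 := (h1.exp).div_const a
    exact h2.congr_deriv (by field_simp)
  rw [intervalIntegral.integral_eq_sub_of_hasDerivAt h (exp_mul_intable a S t)]
  ring

private lemma log_integral_div_tendsto (E : ℝ → ℝ) (hE : Continuous E)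
    (hEpos : ∀ s, 0 < E s) (m : ℝ) (hm : 0 < m)
    (hlim : ∀ ε > 0, ∀ᶠ s in atTop,
      Real.exp ((m-ε)*s) ≤ E s ∧ E s ≤ Real.exp ((m+ε)*s))
    (c : ℝ) (hc : 0 < c) :
    Tendsto (fun t => Real.log (1 + c * ∫ s in (0:ℝ)..t, E s) / t) atTop (nhds m) := by
  set F : ℝ → ℝ := fun t => ∫ s in (0:ℝ)..t, E s with hFdef
  rw [Metric.tendsto_nhds]
  intro ε hε
  set δ := min (ε/4) (m/2) with hδdef
  have hδ : 0 < δ := lt_min (by linarith) (by linarith)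
  have hδε : δ ≤ ε/4 := min_le_left _ _
  have hδm : δ ≤ m/2 := min_le_right _ _
  have ha : 0 < m + δ := by linarith
  have hb : 0 < m - δ := by linarith
  obtain ⟨S₀, hS₀⟩ := eventually_atTop.mp (hlim δ hδ)
  set S := max S₀ 0 with hSdef
  have hS0 : 0 ≤ S := le_max_right _ _
  have hS : ∀ s, S ≤ s → Real.exp ((m-δ)*s) ≤ E s ∧ E s ≤ Real.exp ((m+δ)*s) :=
    fun s hs => hS₀ s (le_trans (le_max_left _ _) hs)
  have hFS : 0 ≤ F S := intervalIntegral.integral_nonneg hS0 (fun u _ => (hEpos u).le)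
  set C := 1 + c * F S + c/(m+δ) with hCdef
  have hC : 0 < C := by
    have h1 : 0 ≤ c * F S := mul_nonneg hc.le hFS
    have h2 : 0 < c/(m+δ) := div_pos hc ha
    rw [hCdef]; linarith
  set c₂ := c/(2*(m-δ)) with hc₂def
  have hc₂ : 0 < c₂ := div_pos hc (by linarith)
  have key : ∀ t, max S (S + Real.log 2 / (m-δ)) ≤ t →
      (m-δ)*t + Real.log c₂ ≤ Real.log (1 + c*F t) ∧
      Real.log (1 + c*F t) ≤ (m+δ)*t + Real.log C := by
    intro t ht
    have htS : S ≤ t := le_trans (le_max_left _ _) ht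
    have ht0 : 0 ≤ t := le_trans hS0 htS
    have htlog : S + Real.log 2 / (m-δ) ≤ t := le_trans (le_max_right _ _) ht
    have hsplit : F S + ∫ s in S..t, E s = F t :=
      intervalIntegral.integral_add_adjacent_intervals
        (hE.intervalIntegrable _ _) (hE.intervalIntegrable _ _)
    have hup : (∫ s in S..t, E s) ≤ (Real.exp ((m+δ)*t) - Real.exp ((m+δ)*S))/(m+δ) := by
      rw [← integral_exp_mul' _ ha]
      apply intervalIntegral.integral_mono_on htS (hE.intervalIntegrable _ _)
        (exp_mul_intable _ _ _)
      intro x hx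
      exact (hS x hx.1).2
    have hlo : (Real.exp ((m-δ)*t) - Real.exp ((m-δ)*S))/(m-δ) ≤ ∫ s in S..t, E s := by
      rw [← integral_exp_mul' _ hb]
      apply intervalIntegral.integral_mono_on htS (exp_mul_intable _ _ _)
        (hE.intervalIntegrable _ _)
      intro x hx
      exact (hS x hx.1).1
    constructor
    · -- lower bound
      have he2 : 2 * Real.exp ((m-δ)*S) ≤ Real.exp ((m-δ)*t) := by
        have : Real.log 2 + (m-δ)*S ≤ (m-δ)*t := by
          have h2 : Real.log 2 / (m-δ) * (m-δ) = Real.log 2 := by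
            field_simp
          nlinarith [mul_le_mul_of_nonneg_right htlog hb.le]
        calc 2 * Real.exp ((m-δ)*S) = Real.exp (Real.log 2 + (m-δ)*S) := by
              rw [Real.exp_add, Real.exp_log (by norm_num)]
          _ ≤ _ := Real.exp_le_exp.2 this
      have hlow2 : c₂ * Real.exp ((m-δ)*t) ≤ 1 + c * F t := by
        have h1 : (Real.exp ((m-δ)*t) - Real.exp ((m-δ)*S)) ≥ Real.exp ((m-δ)*t)/2 := by
          linarith
        have h2 : c * ((Real.exp ((m-δ)*t) - Real.exp ((m-δ)*S))/(m-δ)) ≤ c * ∫ s in S..t, E s :=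
          mul_le_mul_of_nonneg_left hlo hc.le
        have hq : Real.exp ((m-δ)*t)/(2*(m-δ)) ≤ (Real.exp ((m-δ)*t) - Real.exp ((m-δ)*S))/(m-δ) := by
          rw [div_le_div_iff₀ (by linarith) hb]
          nlinarith [mul_le_mul_of_nonneg_right
            (show Real.exp ((m-δ)*t) ≤ 2*(Real.exp ((m-δ)*t) - Real.exp ((m-δ)*S)) by linarith) hb.le]
        have h3 : c₂ * Real.exp ((m-δ)*t) ≤ c * ((Real.exp ((m-δ)*t) - Real.exp ((m-δ)*S))/(m-δ)) := by
          calc c₂ * Real.exp ((m-δ)*t) = c * (Real.exp ((m-δ)*t)/(2*(m-δ))) := by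
                rw [hc₂def]; ring
            _ ≤ _ := mul_le_mul_of_nonneg_left hq hc.le
        have h4 : 0 ≤ c * F S := mul_nonneg hc.le hFS
        have h5 : 1 + c * F t = 1 + c*F S + c * ∫ s in S..t, E s := by
          rw [← hsplit]; ring
        linarith
      calc (m-δ)*t + Real.log c₂ = Real.log (c₂ * Real.exp ((m-δ)*t)) := by
            rw [Real.log_mul hc₂.ne' (Real.exp_ne_zero _), Real.log_exp]; ring
        _ ≤ Real.log (1 + c*F t) :=
            Real.log_le_log (by positivity) hlow2
    · -- upper bound
      have he1 : 1 ≤ Real.exp ((m+δ)*t) := Real.one_le_exp (by positivity)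
      have hup2 : 1 + c * F t ≤ C * Real.exp ((m+δ)*t) := by
        have h2 : c * ∫ s in S..t, E s ≤ c * ((Real.exp ((m+δ)*t) - Real.exp ((m+δ)*S))/(m+δ)) :=
          mul_le_mul_of_nonneg_left hup hc.le
        have hq : (Real.exp ((m+δ)*t) - Real.exp ((m+δ)*S))/(m+δ) ≤ Real.exp ((m+δ)*t)/(m+δ) :=
          div_le_div_of_nonneg_right (sub_le_self _ (Real.exp_pos _).le) ha.le
        have h3 : c * ((Real.exp ((m+δ)*t) - Real.exp ((m+δ)*S))/(m+δ)) ≤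
            (c/(m+δ)) * Real.exp ((m+δ)*t) := by
          calc c * ((Real.exp ((m+δ)*t) - Real.exp ((m+δ)*S))/(m+δ))
              ≤ c * (Real.exp ((m+δ)*t)/(m+δ)) := mul_le_mul_of_nonneg_left hq hc.le
            _ = (c/(m+δ)) * Real.exp ((m+δ)*t) := by ring
        have h4 : 0 ≤ c * F S := mul_nonneg hc.le hFS
        have h5 : (1 + c * F S) * 1 ≤ (1 + c * F S) * Real.exp ((m+δ)*t) :=
          mul_le_mul_of_nonneg_left he1 (by linarith)
        calc 1 + c * F t = 1 + c*F S + c * ∫ s in S..t, E s := by rw [← hsplit]; ring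
          _ ≤ 1 + c*F S + (c/(m+δ)) * Real.exp ((m+δ)*t) := by linarith
          _ ≤ (1 + c*F S) * Real.exp ((m+δ)*t) + (c/(m+δ)) * Real.exp ((m+δ)*t) := by linarith
          _ = C * Real.exp ((m+δ)*t) := by rw [hCdef]; ring
      have hFt : 0 ≤ F t := intervalIntegral.integral_nonneg ht0 (fun u _ => (hEpos u).le)
      calc Real.log (1 + c*F t) ≤ Real.log (C * Real.exp ((m+δ)*t)) :=
            Real.log_le_log (by linarith [mul_nonneg hc.le hFt]) hup2
        _ = (m+δ)*t + Real.log C := by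
            rw [Real.log_mul hC.ne' (Real.exp_ne_zero _), Real.log_exp]; ring
  have t1 : Tendsto (fun t : ℝ => Real.log C / t) atTop (nhds 0) :=
    tendsto_const_nhds.div_atTop tendsto_id
  have t2 : Tendsto (fun t : ℝ => Real.log c₂ / t) atTop (nhds 0) :=
    tendsto_const_nhds.div_atTop tendsto_id
  have h1 : ∀ᶠ t : ℝ in atTop, Real.log C / t < ε/2 :=
    t1.eventually (gt_mem_nhds (by linarith))
  have h2 : ∀ᶠ t : ℝ in atTop, -(ε/2) < Real.log c₂ / t :=
    t2.eventually (lt_mem_nhds (by linarith))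
  filter_upwards [h1, h2, eventually_ge_atTop (max S (S + Real.log 2 / (m-δ))),
    eventually_gt_atTop 0] with t ht1 ht2 ht3 ht4
  obtain ⟨hlow, hupp⟩ := key t ht3
  rw [Real.dist_eq, abs_lt]
  have hd1 : ((m-δ)*t + Real.log c₂)/t ≤ Real.log (1 + c*F t)/t :=
    div_le_div_of_nonneg_right hlow ht4.le
  have hd2 : Real.log (1 + c*F t)/t ≤ ((m+δ)*t + Real.log C)/t :=
    div_le_div_of_nonneg_right hupp ht4.le
  have he1 : ((m-δ)*t + Real.log c₂)/t = (m-δ) + Real.log c₂/t := by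
    rw [add_div, mul_div_assoc, div_self ht4.ne', mul_one]
  have he2 : ((m+δ)*t + Real.log C)/t = (m+δ) + Real.log C/t := by
    rw [add_div, mul_div_assoc, div_self ht4.ne', mul_one]
  rw [he1] at hd1
  rw [he2] at hd2
  constructor <;> linarith

theorem stmt_18 (K : ℝ → ℝ) (hK : ContinuousOn K (Set.Ici 0))
    (m : ℝ) (hm : 0 < m)
    (hKlim : Tendsto (fun s => K s / s) atTop (nhds m))
    (z k : ℝ) (hz : 0 < z) (hk : 0 < k)
    (Z : ℝ → ℝ)
    (hZ : ∀ s, Z s = z * Real.exp (K s) /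
      (1 + k * z * ∫ r in (0:ℝ)..s, Real.exp (K r))) :
    Tendsto (fun t => (∫ s in (0:ℝ)..t, Z s) / t) atTop (nhds (m / k)) := by
  set Kt : ℝ → ℝ := fun s => K (max s 0) with hKtdef
  have hKtc : Continuous Kt :=
    hK.comp_continuous (continuous_id.max continuous_const) (fun x => Set.mem_Ici.mpr (le_max_right _ _))
  set E : ℝ → ℝ := fun s => Real.exp (Kt s) with hEdef
  have hEc : Continuous E := Real.continuous_exp.comp hKtc
  have hEpos : ∀ s, 0 < E s := fun s => Real.exp_pos _
  set F : ℝ → ℝ := fun t => ∫ s in (0:ℝ)..t, E s with hFdef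
  have hFd : ∀ t, HasDerivAt F (E t) t := fun t =>
    intervalIntegral.integral_hasDerivAt_right (hEc.intervalIntegrable _ _)
      (hEc.stronglyMeasurableAtFilter _ _) hEc.continuousAt
  have hFc : Continuous F := continuous_iff_continuousAt.mpr fun x => (hFd x).continuousAt
  have hFnn : ∀ t, 0 ≤ t → 0 ≤ F t := fun t ht =>
    intervalIntegral.integral_nonneg ht (fun u _ => (hEpos u).le)
  have hKeq : ∀ s, 0 ≤ s → K s = Kt s := fun s hs => by
    rw [hKtdef]; simp [max_eq_left hs]
  have hFeq : ∀ s, 0 ≤ s → (∫ r in (0:ℝ)..s, Real.exp (K r)) = F s := by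
    intro s hs
    apply intervalIntegral.integral_congr
    intro r hr
    rw [Set.uIcc_of_le hs] at hr
    show Real.exp (K r) = E r
    rw [hKeq r hr.1]
  have hZint : ∀ t, 0 ≤ t → (∫ s in (0:ℝ)..t, Z s) = Real.log (1 + k*z*F t) / k := by
    intro t ht
    have hZeq : Set.EqOn Z (fun s => z * E s / (1 + k*z*F s)) (Set.uIcc (0:ℝ) t) := by
      intro s hs
      rw [Set.uIcc_of_le ht] at hs
      rw [hZ s, hKeq s hs.1, hFeq s hs.1]
    rw [intervalIntegral.integral_congr hZeq]
    have hder : ∀ x ∈ Set.uIcc (0:ℝ) t,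
        HasDerivAt (fun s => Real.log (1 + k*z*F s) / k) (z * E x / (1 + k*z*F x)) x := by
      intro x hx
      rw [Set.uIcc_of_le ht] at hx
      have hpos : 0 < 1 + k*z*F x := by
        have := mul_nonneg (mul_pos hk hz).le (hFnn x hx.1)
        linarith
      have h1 : HasDerivAt (fun s => 1 + k*z*F s) (k*z*E x) x :=
        ((hFd x).const_mul (k*z)).const_add 1
      have h2 := (h1.log hpos.ne').div_const k
      exact h2.congr_deriv (by field_simp)
    have hcont : ContinuousOn (fun s => z * E s / (1 + k*z*F s)) (Set.uIcc (0:ℝ) t) := by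
      apply ContinuousOn.div
        ((continuous_const.mul hEc).continuousOn)
        ((continuous_const.add (continuous_const.mul hFc)).continuousOn)
      intro x hx
      rw [Set.uIcc_of_le ht] at hx
      have := mul_nonneg (mul_pos hk hz).le (hFnn x hx.1)
      show 1 + k*z*F x ≠ 0
      exact ne_of_gt (by linarith)
    rw [intervalIntegral.integral_eq_sub_of_hasDerivAt hder (hcont.intervalIntegrable)]
    have hF0 : F 0 = 0 := intervalIntegral.integral_same
    rw [hF0]
    norm_num
  have hbnd : ∀ ε > 0, ∀ᶠ s in atTop,
      Real.exp ((m-ε)*s) ≤ E s ∧ E s ≤ Real.exp ((m+ε)*s) := by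
    intro ε hε
    have h := Metric.tendsto_nhds.mp hKlim ε hε
    filter_upwards [h, eventually_ge_atTop (1:ℝ)] with s h1 h2
    have hs0 : (0:ℝ) < s := by linarith
    rw [Real.dist_eq, abs_lt] at h1
    have hE1 : E s = Real.exp (K s) := by
      show Real.exp (Kt s) = Real.exp (K s)
      rw [← hKeq s hs0.le]
    have hbound1 : (m-ε)*s ≤ K s := by
      have h3 : m - ε < K s / s := by linarith [h1.1]
      calc (m-ε)*s ≤ (K s / s) * s := mul_le_mul_of_nonneg_right h3.le hs0.le
        _ = K s := div_mul_cancel₀ _ hs0.ne'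
    have hbound2 : K s ≤ (m+ε)*s := by
      have h3 : K s / s < m + ε := by linarith [h1.2]
      calc K s = (K s / s) * s := (div_mul_cancel₀ _ hs0.ne').symm
        _ ≤ (m+ε)*s := mul_le_mul_of_nonneg_right h3.le hs0.le
    rw [hE1]
    exact ⟨Real.exp_le_exp.2 hbound1, Real.exp_le_exp.2 hbound2⟩
  have hlog := log_integral_div_tendsto E hEc hEpos m hm hbnd (k*z) (mul_pos hk hz)
  have heq : (fun t => Real.log (1 + k*z* F t) / t / k) =ᶠ[atTop]
      (fun t => (∫ s in (0:ℝ)..t, Z s) / t) := by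
    filter_upwards [eventually_ge_atTop (0:ℝ)] with t ht
    rw [hZint t ht]
    ring
  exact Filter.Tendsto.congr' heq (hlog.div_const k)
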